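/- Let m ≥ 3, let S be a finite set with |S| = 2m, let X ⊆ S with |X| = m, and let Q₀ ⊆ X with |Q₀| = 3. Let F be a finite family of 3-element subsets of S such that: (i) no member of F is contained in X and no member of F is contained in S∖X; (ii) for every x ∈ X∖Q₀ there exists Q ∈ F with Q ⊆ (S∖X) ∪ {x}; (iii) for every y ∈ S∖X there exists Q ∈ F with Q ⊆ X ∪ {y}. Then |F| ≥ 2m − 3. -/

import Mathlib

/-- Set-family counting from Case 2 of Lemma 3.4: with `|S| = 2m`, `|X| = m`,
`Q₀ ⊆ X` with `|Q₀| = 3`, a family `F` of 3-subsets of `S` none inside `X` or `S \ X`,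
such that every `x ∈ X \ Q₀` has a member inside `(S \ X) ∪ {x}` and every `y ∈ S \ X`
has a member inside `X ∪ {y}`, satisfies `|F| ≥ 2m - 3`. -/
theorem stmt_7 {α : Type*} [DecidableEq α] (m : ℕ) (hm : 3 ≤ m)
    (S : Finset α) (hS : S.card = 2 * m)
    (X : Finset α) (hXS : X ⊆ S) (hX : X.card = m)
    (Q₀ : Finset α) (hQ₀X : Q₀ ⊆ X) (hQ₀ : Q₀.card = 3)
    (F : Finset (Finset α))
    (hF3 : ∀ Q ∈ F, Q ⊆ S ∧ Q.card = 3)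
    (hi : ∀ Q ∈ F, ¬ Q ⊆ X ∧ ¬ Q ⊆ S \ X)
    (hii : ∀ x ∈ X \ Q₀, ∃ Q ∈ F, Q ⊆ (S \ X) ∪ {x})
    (hiii : ∀ y ∈ S \ X, ∃ Q ∈ F, Q ⊆ X ∪ {y}) :
    2 * m - 3 ≤ F.card := by
  classical
  -- For each x ∈ X \ Q₀ there is Q ∈ F with Q ∩ X = {x}
  have key1 : ∀ x ∈ X \ Q₀, ∃ Q ∈ F, Q ∩ X = {x} := by
    intro x hx
    obtain ⟨Q, hQF, hQsub⟩ := hii x hx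
    refine ⟨Q, hQF, ?_⟩
    have hxX : x ∈ X := (Finset.mem_sdiff.mp hx).1
    have hsub : Q ∩ X ⊆ {x} := by
      intro q hq
      rw [Finset.mem_inter] at hq
      rcases Finset.mem_union.mp (hQsub hq.1) with h | h
      · exact absurd hq.2 (Finset.mem_sdiff.mp h).2
      · exact h
    have hne : (Q ∩ X).Nonempty := by
      by_contra h
      rw [Finset.not_nonempty_iff_eq_empty] at h
      refine (hi Q hQF).2 ?_
      intro q hq
      rw [Finset.mem_sdiff]
      refine ⟨(hF3 Q hQF).1 hq, fun hqX => ?_⟩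
      have : q ∈ Q ∩ X := Finset.mem_inter.mpr ⟨hq, hqX⟩
      simp [h] at this
    obtain ⟨q, hq⟩ := hne
    have hqx : q = x := Finset.mem_singleton.mp (hsub hq)
    apply Finset.Subset.antisymm hsub
    intro a ha
    rw [Finset.mem_singleton] at ha; subst ha
    rwa [← hqx]
  have key2 : ∀ y ∈ S \ X, ∃ Q ∈ F, Q ∩ (S \ X) = {y} := by
    intro y hy
    obtain ⟨Q, hQF, hQsub⟩ := hiii y hy
    refine ⟨Q, hQF, ?_⟩
    have hsub : Q ∩ (S \ X) ⊆ {y} := by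
      intro q hq
      rw [Finset.mem_inter] at hq
      rcases Finset.mem_union.mp (hQsub hq.1) with h | h
      · exact absurd h (Finset.mem_sdiff.mp hq.2).2
      · exact h
    have hne : (Q ∩ (S \ X)).Nonempty := by
      by_contra h
      rw [Finset.not_nonempty_iff_eq_empty] at h
      refine (hi Q hQF).1 ?_
      intro q hq
      by_contra hqX
      have : q ∈ Q ∩ (S \ X) :=
        Finset.mem_inter.mpr ⟨hq, Finset.mem_sdiff.mpr ⟨(hF3 Q hQF).1 hq, hqX⟩⟩
      simp [h] at this
    obtain ⟨q, hq⟩ := hne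
    have hqy : q = y := Finset.mem_singleton.mp (hsub hq)
    apply Finset.Subset.antisymm hsub
    intro a ha
    rw [Finset.mem_singleton] at ha; subst ha
    rwa [← hqy]
  -- partition of Q ⊆ S : |Q ∩ X| + |Q ∩ (S\X)| = 3
  have hsplit : ∀ Q ∈ F, (Q ∩ X).card + (Q ∩ (S \ X)).card = 3 := by
    intro Q hQF
    have h1 : Q ∩ X ∪ Q ∩ (S \ X) = Q := by
      ext q
      simp only [Finset.mem_union, Finset.mem_inter, Finset.mem_sdiff]
      constructor
      · rintro (⟨h, _⟩ | ⟨h, _⟩) <;> exact h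
      · intro hq
        by_cases hqX : q ∈ X
        · exact Or.inl ⟨hq, hqX⟩
        · exact Or.inr ⟨hq, (hF3 Q hQF).1 hq, hqX⟩
    have h2 : Disjoint (Q ∩ X) (Q ∩ (S \ X)) := by
      apply Finset.disjoint_left.mpr
      intro a ha hb
      exact (Finset.mem_sdiff.mp (Finset.mem_inter.mp hb).2).2 (Finset.mem_inter.mp ha).2
    rw [← Finset.card_union_of_disjoint h2, h1, (hF3 Q hQF).2]
  -- two disjoint subfamilies
  set A := F.filter (fun Q => (Q ∩ X).card = 1) with hA
  set B := F.filter (fun Q => (Q ∩ X).card = 2) with hB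
  have hdisj : Disjoint A B := by
    apply Finset.disjoint_left.mpr
    intro Q hQA hQB
    have h1 := (Finset.mem_filter.mp hQA).2
    have h2 := (Finset.mem_filter.mp hQB).2
    omega
  -- f : X \ Q₀ → A injective
  have f_def : ∀ x ∈ X \ Q₀, ∃ Q ∈ A, Q ∩ X = {x} := by
    intro x hx
    obtain ⟨Q, hQF, hQx⟩ := key1 x hx
    exact ⟨Q, Finset.mem_filter.mpr ⟨hQF, by rw [hQx]; simp⟩, hQx⟩
  have g_def : ∀ y ∈ S \ X, ∃ Q ∈ B, Q ∩ (S \ X) = {y} := by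
    intro y hy
    obtain ⟨Q, hQF, hQy⟩ := key2 y hy
    have : (Q ∩ X).card = 2 := by
      have := hsplit Q hQF
      rw [hQy] at this
      simp at this
      omega
    exact ⟨Q, Finset.mem_filter.mpr ⟨hQF, this⟩, hQy⟩
  have hAcard : m - 3 ≤ A.card := by
    have : (X \ Q₀).card ≤ A.card := by
      apply Finset.card_le_card_of_injOn
        (fun x => if h : x ∈ X \ Q₀ then (f_def x h).choose else ∅)
      · intro x hx
        simp only [Finset.mem_coe] at hx ⊢
        simp only [dif_pos hx]
        exact (f_def x hx).choose_spec.1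
      · intro x hx y hy hxy
        simp only [Finset.mem_coe] at hx hy
        simp only [dif_pos hx, dif_pos hy] at hxy
        have h1 := (f_def x hx).choose_spec.2
        have h2 := (f_def y hy).choose_spec.2
        rw [hxy, h2] at h1
        exact (Finset.singleton_injective h1).symm
    have : (X \ Q₀).card = m - 3 := by
      rw [Finset.card_sdiff_of_subset hQ₀X, hX, hQ₀]
    omega
  have hBcard : m ≤ B.card := by
    have : (S \ X).card ≤ B.card := by
      apply Finset.card_le_card_of_injOn
        (fun y => if h : y ∈ S \ X then (g_def y h).choose else ∅)
      · intro y hy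
        simp only [Finset.mem_coe] at hy ⊢
        simp only [dif_pos hy]
        exact (g_def y hy).choose_spec.1
      · intro x hx y hy hxy
        simp only [Finset.mem_coe] at hx hy
        simp only [dif_pos hx, dif_pos hy] at hxy
        have h1 := (g_def x hx).choose_spec.2
        have h2 := (g_def y hy).choose_spec.2
        rw [hxy, h2] at h1
        exact (Finset.singleton_injective h1).symm
    have : (S \ X).card = m := by
      rw [Finset.card_sdiff_of_subset hXS, hS, hX]; omega
    omega
  have hsum : A.card + B.card ≤ F.card := by
    rw [← Finset.card_union_of_disjoint hdisj]
    apply Finset.card_le_card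
    intro Q hQ
    rcases Finset.mem_union.mp hQ with h | h
    · exact (Finset.mem_filter.mp h).1
    · exact (Finset.mem_filter.mp h).1
  omega
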